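/- Let n, n₁, n₂ be positive integers with n₁ ≤ 10⁻⁶·n and 10⁻⁶·n ≤ n₂ ≤ n. Let M be a random n×n real matrix whose n² entries are mutually independent, each with mean 0, variance at most σ² for some real σ ≥ 20/√n, and almost surely bounded in [−1,1]. Then with probability at least 1 − exp(−8·(n₁ + 10⁻⁶·n)·log(n/n₁ + 10⁶)), simultaneously for all subsets S, T ⊆ {1,…,n} with |S| = n₁ and |T| = n₂, the magnitude of the sum of the entries of M over S × T satisfies |∑_{i∈S} ∑_{j∈T} M_{ij}| ≤ 2·(n₁ + n₂)·σ·√n. -/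

import Mathlib

set_option autoImplicit false

open MeasureTheory ProbabilityTheory

open Real
open scoped Nat
set_option maxHeartbeats 1000000
set_option maxRecDepth 8000

lemma exp_taylor2 (y : ℝ) : Real.exp y = 1 + y + ∑' n : ℕ, y ^ (n + 2) / (n + 2) ! := by
  have hs : Summable (fun n : ℕ => y ^ n / n !) := Real.summable_pow_div_factorial y
  have h := (Summable.sum_add_tsum_nat_add 2 hs).symm
  have hexp : Real.exp y = ∑' n : ℕ, y ^ n / n ! := by
    rw [Real.exp_eq_exp_ℝ, NormedSpace.exp_eq_tsum_div]
  rw [hexp, h]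
  simp [Finset.sum_range_succ]

lemma exp_mul_le_quad {c x : ℝ} (hc : 0 ≤ c) (hx : |x| ≤ 1) :
    Real.exp (c * x) ≤ 1 + c * x + (Real.exp c - 1 - c) * x ^ 2 := by
  have hs : Summable (fun n : ℕ => c ^ n / n !) := Real.summable_pow_div_factorial c
  have hs2 : Summable (fun n : ℕ => c ^ (n + 2) / (n + 2) !) :=
    (summable_nat_add_iff 2).mpr hs
  have hs1 : Summable (fun n : ℕ => (c * x) ^ n / n !) := Real.summable_pow_div_factorial _
  have hs12 : Summable (fun n : ℕ => (c * x) ^ (n + 2) / (n + 2) !) :=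
    (summable_nat_add_iff 2).mpr hs1
  have key : ∑' n : ℕ, (c * x) ^ (n + 2) / (n + 2) ! ≤
      ∑' n : ℕ, (c ^ (n + 2) / (n + 2) !) * x ^ 2 := by
    refine Summable.tsum_le_tsum (fun n => ?_) hs12 (hs2.mul_right _)
    have h1 : (c * x) ^ (n + 2) ≤ c ^ (n + 2) * x ^ 2 := by
      have : (c * x) ^ (n + 2) ≤ |(c * x) ^ (n + 2)| := le_abs_self _
      refine this.trans ?_
      rw [abs_pow, abs_mul, abs_of_nonneg hc, mul_pow]
      have hxx : |x| ^ (n + 2) ≤ x ^ 2 := by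
        calc |x| ^ (n + 2) ≤ |x| ^ 2 := pow_le_pow_of_le_one (abs_nonneg x) hx (by omega)
        _ = x ^ 2 := sq_abs x
      exact mul_le_mul_of_nonneg_left hxx (pow_nonneg hc _)
    have hfac : (0:ℝ) < (n + 2) ! := by positivity
    rw [div_mul_eq_mul_div, div_le_div_iff_of_pos_right hfac]
    exact h1
  have hrhs : ∑' n : ℕ, (c ^ (n + 2) / (n + 2) !) * x ^ 2 =
      (Real.exp c - 1 - c) * x ^ 2 := by
    rw [tsum_mul_right]
    have := exp_taylor2 c
    have h2 : ∑' n : ℕ, c ^ (n + 2) / (n + 2) ! = Real.exp c - 1 - c := by linarith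
    rw [h2]
  have h1 := exp_taylor2 (c * x)
  have h2 : ∑' n : ℕ, (c * x) ^ (n + 2) / (n + 2) ! ≤ (Real.exp c - 1 - c) * x ^ 2 :=
    key.trans_eq hrhs
  linarith


section
variable {Ω : Type*} [MeasurableSpace Ω] {μ : Measure Ω} [IsProbabilityMeasure μ]

lemma integrable_of_abs_le_one {X : Ω → ℝ} (hm : Measurable X) (hb : ∀ᵐ ω ∂μ, |X ω| ≤ 1) :
    Integrable X μ :=
  (integrable_const (1:ℝ)).mono' hm.aestronglyMeasurable (by filter_upwards [hb] with ω h using h)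

lemma integrable_exp_mul {X : Ω → ℝ} (hm : Measurable X) (hb : ∀ᵐ ω ∂μ, |X ω| ≤ 1)
    {c : ℝ} (hc : 0 ≤ c) : Integrable (fun ω => Real.exp (c * X ω)) μ := by
  refine (integrable_const (Real.exp c)).mono' (hm.const_mul c).exp.aestronglyMeasurable ?_
  filter_upwards [hb] with ω h
  rw [Real.norm_eq_abs, abs_of_pos (Real.exp_pos _), Real.exp_le_exp]
  calc c * X ω ≤ c * 1 := by
        have := (abs_le.mp h).2
        exact mul_le_mul_of_nonneg_left this hc
  _ = c := mul_one c

lemma mgf_le_bennett {X : Ω → ℝ} (hm : Measurable X) (h0 : ∫ ω, X ω ∂μ = 0) {v : ℝ}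
    (hv : ∫ ω, (X ω) ^ 2 ∂μ ≤ v) (hb : ∀ᵐ ω ∂μ, |X ω| ≤ 1) {c : ℝ} (hc : 0 ≤ c) :
    mgf X μ c ≤ Real.exp (v * (Real.exp c - 1 - c)) := by
  have hecc : 0 ≤ Real.exp c - 1 - c := by nlinarith [Real.add_one_le_exp c]
  have hintX : Integrable X μ := integrable_of_abs_le_one hm hb
  have hintX2 : Integrable (fun ω => (X ω) ^ 2) μ := by
    refine (integrable_const (1:ℝ)).mono' (hm.pow_const 2).aestronglyMeasurable ?_
    filter_upwards [hb] with ω h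
    have h2 : |X ω| ^ 2 ≤ 1 := by nlinarith [abs_nonneg (X ω)]
    calc ‖X ω ^ 2‖ = |X ω| ^ 2 := by rw [Real.norm_eq_abs, abs_pow]
      _ ≤ 1 := h2
  have hintExp : Integrable (fun ω => Real.exp (c * X ω)) μ := integrable_exp_mul hm hb hc
  have i1 : Integrable (fun ω => 1 + c * X ω) μ := by
    exact (integrable_const (1:ℝ)).add (hintX.const_mul c)
  have i2 : Integrable (fun ω => (Real.exp c - 1 - c) * (X ω) ^ 2) μ := by
    exact hintX2.const_mul _
  have hmono : mgf X μ c ≤ ∫ ω, (1 + c * X ω + (Real.exp c - 1 - c) * (X ω) ^ 2) ∂μ := by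
    refine integral_mono_ae hintExp (by exact i1.add i2) ?_
    filter_upwards [hb] with ω h using exp_mul_le_quad hc h
  have e1 : ∫ ω, (1 + c * X ω) ∂μ = 1 := by
    rw [integral_add (integrable_const (1:ℝ)) (hintX.const_mul c), integral_const,
      integral_const_mul, h0]
    simp
  have heval : ∫ ω, (1 + c * X ω + (Real.exp c - 1 - c) * (X ω) ^ 2) ∂μ
      = 1 + (Real.exp c - 1 - c) * ∫ ω, (X ω) ^ 2 ∂μ := by
    rw [integral_add i1 i2, e1, integral_const_mul]
  have hvX2 : (0:ℝ) ≤ ∫ ω, (X ω) ^ 2 ∂μ := integral_nonneg fun ω => sq_nonneg _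
  have : mgf X μ c ≤ 1 + v * (Real.exp c - 1 - c) := by
    rw [heval] at hmono
    nlinarith [mul_le_mul_of_nonneg_left hv hecc]
  refine this.trans ?_
  linarith [Real.add_one_le_exp (v * (Real.exp c - 1 - c))]

lemma tail_bennett {ι : Type*} {X : ι → Ω → ℝ} (hmeas : ∀ i, Measurable (X i))
    (hindep : iIndepFun (m := fun _ : ι => (inferInstance : MeasurableSpace ℝ)) X μ)
    (hmean : ∀ i, ∫ ω, X i ω ∂μ = 0) {v : ℝ} (hvar : ∀ i, ∫ ω, (X i ω) ^ 2 ∂μ ≤ v)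
    (hbdd : ∀ i, ∀ᵐ ω ∂μ, |X i ω| ≤ 1) (s : Finset ι) {c : ℝ} (hc : 0 ≤ c) (r : ℝ) :
    μ {ω | r ≤ ∑ i ∈ s, X i ω} ≤
      ENNReal.ofReal (Real.exp ((s.card : ℝ) * (v * (Real.exp c - 1 - c)) - c * r)) := by
  have h_int : ∀ i ∈ s, Integrable (fun ω => Real.exp (c * X i ω)) μ := fun i _ =>
    integrable_exp_mul (hmeas i) (hbdd i) hc
  have hint_sum := hindep.integrable_exp_mul_sum hmeas h_int
  have chernoff := measure_ge_le_exp_mul_mgf (X := ∑ i ∈ s, X i) (μ := μ) r hc hint_sum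
  have hset : {ω | r ≤ (∑ i ∈ s, X i) ω} = {ω | r ≤ ∑ i ∈ s, X i ω} := by
    ext ω; simp [Finset.sum_apply]
  rw [hset] at chernoff
  have hmgf : mgf (∑ i ∈ s, X i) μ c ≤ Real.exp ((s.card : ℝ) * (v * (Real.exp c - 1 - c))) := by
    rw [hindep.mgf_sum hmeas]
    calc ∏ i ∈ s, mgf (X i) μ c
        ≤ ∏ _i ∈ s, Real.exp (v * (Real.exp c - 1 - c)) := by
          refine Finset.prod_le_prod (fun i _ => mgf_nonneg) fun i _ =>
            mgf_le_bennett (hmeas i) (hmean i) (hvar i) (hbdd i) hc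
      _ = Real.exp ((s.card : ℝ) * (v * (Real.exp c - 1 - c))) := by
          rw [Finset.prod_const, ← Real.exp_nat_mul]
  have hfinal : (μ {ω | r ≤ ∑ i ∈ s, X i ω}).toReal ≤
      Real.exp ((s.card : ℝ) * (v * (Real.exp c - 1 - c)) - c * r) := by
    calc (μ {ω | r ≤ ∑ i ∈ s, X i ω}).toReal
        ≤ Real.exp (-c * r) * mgf (∑ i ∈ s, X i) μ c := chernoff
      _ ≤ Real.exp (-c * r) * Real.exp ((s.card : ℝ) * (v * (Real.exp c - 1 - c))) := by
          exact mul_le_mul_of_nonneg_left hmgf (Real.exp_pos _).le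
      _ = Real.exp ((s.card : ℝ) * (v * (Real.exp c - 1 - c)) - c * r) := by
          rw [← Real.exp_add]; ring_nf
  have hne : μ {ω | r ≤ ∑ i ∈ s, X i ω} ≠ ⊤ := measure_ne_top _ _
  calc μ {ω | r ≤ ∑ i ∈ s, X i ω} = ENNReal.ofReal (μ {ω | r ≤ ∑ i ∈ s, X i ω}).toReal :=
        (ENNReal.ofReal_toReal hne).symm
    _ ≤ _ := ENNReal.ofReal_le_ofReal hfinal

end

lemma exp13_le : Real.exp 13 ≤ 1000000 := by
  have h : Real.exp 13 = Real.exp 1 ^ (13 : ℕ) := by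
    rw [← Real.exp_nat_mul]; norm_num
  have h2 : Real.exp 1 ^ (13:ℕ) ≤ 2.7182818286 ^ (13:ℕ) :=
    pow_le_pow_left₀ (Real.exp_pos 1).le Real.exp_one_lt_d9.le 13
  rw [h]; refine h2.trans (by norm_num)

lemma e6_le_exp14 : (1000000 : ℝ) ≤ Real.exp 14 := by
  have h : Real.exp 14 = Real.exp 1 ^ (14 : ℕ) := by
    rw [← Real.exp_nat_mul]; norm_num
  have h2 : (2.7182818283 : ℝ) ^ (14:ℕ) ≤ Real.exp 1 ^ (14:ℕ) :=
    pow_le_pow_left₀ (by norm_num) Real.exp_one_gt_d9.le 14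
  rw [h]; refine le_trans (by norm_num) h2

lemma exp4_ge : (53 : ℝ) ≤ Real.exp 4 := by
  have h : Real.exp 4 = Real.exp 1 ^ (4 : ℕ) := by
    rw [← Real.exp_nat_mul]; norm_num
  have h2 : (2.7182818283 : ℝ) ^ (4:ℕ) ≤ Real.exp 1 ^ (4:ℕ) :=
    pow_le_pow_left₀ (by norm_num) Real.exp_one_gt_d9.le 4
  rw [h]; refine le_trans (by norm_num) h2

lemma exp_quad_le {c : ℝ} (hc0 : 0 ≤ c) (hc1 : c ≤ 1) :
    Real.exp c - 1 - c ≤ (3/4) * c ^ 2 := by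
  have h := Real.exp_bound (x := c) (by rw [abs_of_nonneg hc0]; exact hc1) (by norm_num : 0 < 2)
  have hs : ∑ i ∈ Finset.range 2, c ^ i / i.factorial = 1 + c := by
    simp [Finset.sum_range_succ]
  rw [hs, abs_of_nonneg hc0] at h
  have h2 := (abs_le.mp h).2
  norm_num at h2 ⊢
  nlinarith [h2]

lemma budget_aux (a b q L lb l2 lA : ℝ) (ha : 1 ≤ a) (hb : 1 ≤ b) (hq0 : 0 ≤ q) (hqb : q ≤ b)
    (hL : 13 ≤ L) (hlb : 0 ≤ lb) (hlb14 : lb ≤ 14) (hl2 : 0 ≤ l2) (hl27 : l2 ≤ 0.7)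
    (hlA : 0 ≤ lA) (hlA7 : lA ≤ L + 0.7) :
    a * (1 + L) + b * (1 + lb) + l2 + 8 * (a + q) * lA ≤ 12 * (a + b) * L := by
  nlinarith [mul_nonneg (by linarith : (0:ℝ) ≤ a) (by linarith : (0:ℝ) ≤ L - 13),
    mul_nonneg (by linarith : (0:ℝ) ≤ b) (by linarith : (0:ℝ) ≤ L - 13),
    mul_nonneg (by linarith : (0:ℝ) ≤ b) (by linarith : (0:ℝ) ≤ 14 - lb),
    mul_nonneg (by linarith : (0:ℝ) ≤ a + q) (by linarith : (0:ℝ) ≤ L + 0.7 - lA),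
    mul_nonneg (by linarith : (0:ℝ) ≤ b - q) (by linarith : (0:ℝ) ≤ L + 0.7)]

lemma case1_aux (a b s L A1 : ℝ) (ha : 1 ≤ a) (hb : 1 ≤ b) (hL : 13 ≤ L)
    (hs20 : 20 ≤ s) (hcase : s ≤ 24 * L) (hchain : A1 ≤ b * s ^ 2 / 53) :
    A1 - (L - 4) * (2 * (a + b) * s) ≤ -(12 * (a + b) * L) := by
  have hbs : b * s ≤ (a + b) * (24 * L) := by
    calc b * s ≤ (a + b) * s := mul_le_mul_of_nonneg_right (by linarith) (by linarith)
      _ ≤ (a + b) * (24 * L) := mul_le_mul_of_nonneg_left hcase (by linarith)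
  have h1 : b * s ^ 2 ≤ (a + b) * (24 * L) * s := by
    have h := mul_le_mul_of_nonneg_right hbs (by linarith : (0:ℝ) ≤ s)
    nlinarith [h]
  have final1 : 0 ≤ (a + b) * (s * ((82/53) * L - 8) - 12 * L) := by
    have k0 : (0:ℝ) ≤ (82/53) * L - 8 := by linarith
    have inner : 12 * L ≤ s * ((82/53) * L - 8) := by
      nlinarith [mul_nonneg (by linarith : (0:ℝ) ≤ s - 20) k0]
    exact mul_nonneg (by linarith) (by linarith)
  nlinarith [hchain, h1, final1]

lemma case2a_aux (V s a b L : ℝ) (hV0 : 0 ≤ V) (hVt : V ≤ 2 * (a + b) * s)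
    (hab : 0 ≤ a + b) (hsL : 24 * L ≤ s) (hL0 : 0 ≤ L) :
    V * (Real.exp 1 - 1 - 1) - 1 * (2 * (a + b) * s) ≤ -(12 * (a + b) * L) := by
  have he : Real.exp 1 - 1 - 1 ≤ 0.72 := by
    have := Real.exp_one_lt_d9; norm_num at this ⊢; linarith
  have he0 : (0:ℝ) ≤ Real.exp 1 - 1 - 1 := by
    have := Real.exp_one_gt_d9; norm_num at this ⊢; linarith
  nlinarith [mul_le_mul_of_nonneg_left he hV0,
    mul_le_mul_of_nonneg_left hsL hab, mul_le_mul_of_nonneg_left hVt he0]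

lemma case2b_key (a b m L σ : ℝ) (ha : 0 < a) (hb : 0 < b) (hm : 0 < m) (hL0 : 0 ≤ L)
    (hab : 0 ≤ a + b) (hm9 : 9 * L * a ≤ m) :
    12 * (a + b) * L * (3 * (a * b * σ ^ 2)) ≤ 4 * ((a + b) * (a + b)) * (σ ^ 2 * m) := by
  have h := mul_le_mul_of_nonneg_right
    (mul_le_mul_of_nonneg_left hm9 (by positivity : (0:ℝ) ≤ 4 * b * (a + b))) (sq_nonneg σ)
  nlinarith [h, mul_nonneg (mul_nonneg (mul_nonneg ha.le hab) hm.le) (sq_nonneg σ)]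

lemma x9L_aux (x L r : ℝ) (hr : 1000 ≤ r) (hr2 : r ^ 2 = x) (hL : L ≤ 2 * r - 2)
    (hL0 : 0 ≤ L) : 9 * L ≤ x := by
  nlinarith [mul_nonneg (by linarith : (0:ℝ) ≤ r - 1000) (by linarith : (0:ℝ) ≤ r)]

lemma arith_main (a b m σ : ℝ) (ha : 1 ≤ a) (ham : a ≤ m / 1000000)
    (hbm : m / 1000000 ≤ b) (hb : b ≤ m) (hσ : 20 ≤ σ * Real.sqrt m) :
    ∃ c : ℝ, 0 ≤ c ∧
      a * (1 + Real.log (m / a)) + b * (1 + Real.log (m / b)) + Real.log 2 +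
        8 * (a + m / 1000000) * Real.log (m / a + 1000000) +
        ((a * b) * (σ ^ 2 * (Real.exp c - 1 - c)) - c * (2 * (a + b) * σ * Real.sqrt m)) ≤ 0 := by
  have hm : (1000000 : ℝ) ≤ m := by linarith
  have hm0 : (0:ℝ) < m := by linarith
  have hb1 : 1 ≤ b := by linarith
  have ha0 : (0:ℝ) < a := by linarith
  have hb0 : (0:ℝ) < b := by linarith
  have hsq : (1000 : ℝ) ≤ Real.sqrt m := by
    have h := Real.sqrt_le_sqrt hm
    rwa [show (1000000:ℝ) = 1000^2 by norm_num, Real.sqrt_sq (by norm_num : (0:ℝ) ≤ 1000)] at h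
  have hsq0 : (0:ℝ) < Real.sqrt m := by linarith
  have hσ0 : 0 < σ := by
    have h : 0 < (σ * Real.sqrt m) / Real.sqrt m := div_pos (by linarith) hsq0
    rwa [mul_div_assoc, div_self hsq0.ne', mul_one] at h
  have hmsq : Real.sqrt m ^ 2 = m := Real.sq_sqrt hm0.le
  set x := m / a with hxdef
  have hx : (1000000 : ℝ) ≤ x := by
    rw [hxdef, le_div_iff₀ ha0]; nlinarith
  have hx0 : (0:ℝ) < x := by linarith
  set L := Real.log x with hLdef
  have hL13 : (13:ℝ) ≤ L := by
    rw [hLdef, Real.le_log_iff_exp_le hx0]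
    exact exp13_le.trans hx
  have hL0 : (0:ℝ) ≤ L := by linarith
  have hmb1 : (1:ℝ) ≤ m / b := by rw [le_div_iff₀ hb0]; linarith
  have hmb6 : m / b ≤ 1000000 := by
    rw [div_le_iff₀ hb0]; nlinarith
  have hlogmb : Real.log (m / b) ≤ 14 := by
    rw [← Real.log_exp 14]
    exact Real.log_le_log (by linarith) (hmb6.trans e6_le_exp14)
  have hlogmb0 : 0 ≤ Real.log (m / b) := Real.log_nonneg hmb1
  have hlog2 : Real.log 2 ≤ 0.7 := by
    have := Real.log_two_lt_d9
    linarith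
  have hlog20 : 0 ≤ Real.log 2 := Real.log_nonneg (by norm_num)
  have hlogA : Real.log (x + 1000000) ≤ L + 0.7 := by
    have h1 : Real.log (x + 1000000) ≤ Real.log (2 * x) :=
      Real.log_le_log (by linarith) (by linarith)
    rw [Real.log_mul (by norm_num) hx0.ne'] at h1
    linarith
  have hlogA0 : 0 ≤ Real.log (x + 1000000) := Real.log_nonneg (by linarith)
  have budget : a * (1 + L) + b * (1 + Real.log (m / b)) + Real.log 2 +
      8 * (a + m / 1000000) * Real.log (m / a + 1000000) ≤ 12 * (a + b) * L := by
    have hxx : Real.log (m / a + 1000000) = Real.log (x + 1000000) := by rw [hxdef]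
    rw [hxx]
    exact budget_aux a b (m / 1000000) L (Real.log (m/b)) (Real.log 2)
      (Real.log (x + 1000000)) ha hb1 (by linarith) hbm hL13 hlogmb0 hlogmb hlog20 hlog2
      hlogA0 hlogA
  set s := σ * Real.sqrt m with hsdef
  have hs20 : (20:ℝ) ≤ s := hσ
  have hs2 : s ^ 2 = σ ^ 2 * m := by rw [hsdef, mul_pow, hmsq]
  have main : ∃ c : ℝ, 0 ≤ c ∧
      (a * b) * (σ ^ 2 * (Real.exp c - 1 - c)) - c * (2 * (a + b) * s) ≤ -(12 * (a + b) * L) := by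
    rcases le_or_gt s (24 * L) with hcase | hcase
    · -- Case 1 : small sigma, c = L - 4
      refine ⟨L - 4, by linarith, ?_⟩
      have hexpc : Real.exp (L - 4) = x / Real.exp 4 := by
        rw [Real.exp_sub, hLdef, Real.exp_log hx0]
      have hec : Real.exp (L - 4) - 1 - (L - 4) ≤ x / Real.exp 4 := by
        rw [hexpc]; linarith
      have habs : (a * b) * (σ ^ 2 * (Real.exp (L-4) - 1 - (L-4))) ≤
          (a * b) * (σ ^ 2 * (x / Real.exp 4)) := by
        have hab : (0:ℝ) ≤ a * b := by positivity
        have h := mul_le_mul_of_nonneg_left hec (sq_nonneg σ)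
        exact mul_le_mul_of_nonneg_left h hab
      have hxval : (a * b) * (σ ^ 2 * (x / Real.exp 4)) = b * s ^ 2 / Real.exp 4 := by
        rw [hs2, hxdef]
        field_simp
      have h53 : b * s ^ 2 / Real.exp 4 ≤ b * s ^ 2 / 53 :=
        div_le_div_of_nonneg_left (by positivity) (by norm_num) exp4_ge
      have hchain : (a * b) * (σ ^ 2 * (Real.exp (L-4) - 1 - (L-4))) ≤ b * s ^ 2 / 53 := by
        rw [hxval] at habs; exact habs.trans h53
      exact case1_aux a b s L _ ha hb1 hL13 hs20 hcase hchain
    · -- case 2 : large sigma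
      have hV0 : (0:ℝ) < a * b * σ ^ 2 := by positivity
      rcases le_or_gt (a * b * σ ^ 2) (2 * (a + b) * s) with h2a | h2b
      · refine ⟨1, by norm_num, ?_⟩
        have h := case2a_aux (a * b * σ ^ 2) s a b L hV0.le h2a (by linarith) hcase.le hL0
        calc (a * b) * (σ ^ 2 * (Real.exp 1 - 1 - 1)) - 1 * (2 * (a + b) * s)
            = (a * b * σ ^ 2) * (Real.exp 1 - 1 - 1) - 1 * (2 * (a + b) * s) := by ring
          _ ≤ -(12 * (a + b) * L) := h
      · set V := a * b * σ ^ 2 with hVdef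
        set t2 := 2 * (a + b) * s with ht2def
        have ht20 : (0:ℝ) < t2 := by rw [ht2def]; nlinarith
        have h3V : (0:ℝ) < 3 * V := by linarith
        refine ⟨2 * t2 / (3 * V), div_nonneg (by linarith) (by linarith), ?_⟩
        set c := 2 * t2 / (3 * V) with hcdef
        have hc0 : (0:ℝ) ≤ c := div_nonneg (by linarith) (by linarith)
        have hc1 : c ≤ 1 := by
          rw [hcdef, div_le_one h3V]
          linarith
        have hquad := exp_quad_le hc0 hc1
        have step1 : (a * b) * (σ ^ 2 * (Real.exp c - 1 - c)) ≤ V * ((3/4) * c ^ 2) := by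
          have h := mul_le_mul_of_nonneg_left hquad (le_of_lt hV0)
          calc (a * b) * (σ ^ 2 * (Real.exp c - 1 - c))
              = (a * b * σ ^ 2) * (Real.exp c - 1 - c) := by ring
            _ ≤ (a * b * σ ^ 2) * ((3/4) * c ^ 2) := h
            _ = V * ((3/4) * c ^ 2) := by rw [hVdef]
        have step2 : V * ((3/4) * c ^ 2) - c * t2 = -(t2 ^ 2 / (3 * V)) := by
          rw [hcdef]
          field_simp
          ring
        have hsqx : (1000:ℝ) ≤ Real.sqrt x := by
          have h := Real.sqrt_le_sqrt hx
          rwa [show (1000000:ℝ) = 1000^2 by norm_num,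
            Real.sqrt_sq (by norm_num : (0:ℝ) ≤ 1000)] at h
        have hsqx2 : Real.sqrt x ^ 2 = x := Real.sq_sqrt hx0.le
        have hlx : L ≤ 2 * Real.sqrt x - 2 := by
          have h1 : Real.log x = 2 * Real.log (Real.sqrt x) := by
            rw [Real.log_sqrt hx0.le]; ring
          have h2 : Real.log (Real.sqrt x) ≤ Real.sqrt x - 1 :=
            Real.log_le_sub_one_of_pos (by linarith)
          rw [hLdef, h1]; linarith
        have hx9L : 9 * L ≤ x := x9L_aux x L (Real.sqrt x) hsqx hsqx2 hlx hL0
        have hm9 : 9 * L * a ≤ m := by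
          rw [hxdef] at hx9L
          exact (le_div_iff₀ ha0).mp hx9L
        have step3 : 12 * (a + b) * L ≤ t2 ^ 2 / (3 * V) := by
          rw [le_div_iff₀ h3V, ht2def, hVdef]
          have e : (2 * (a + b) * s) ^ 2 = 4 * ((a + b) * (a + b)) * (σ ^ 2 * m) := by
            rw [mul_pow, mul_pow, hs2]; ring
          rw [e]
          exact case2b_key a b m L σ ha0 hb0 hm0 hL0 (by linarith) hm9
        have hfin : V * ((3/4) * c ^ 2) - c * t2 ≤ -(12 * (a + b) * L) := by
          rw [step2]; linarith only [step3]
        linarith only [step1, hfin]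
  rcases main with ⟨c, hc0, hmain⟩
  refine ⟨c, hc0, ?_⟩
  have hrw : 2 * (a + b) * σ * Real.sqrt m = 2 * (a + b) * s := by rw [hsdef]; ring
  rw [hrw]
  linarith only [hmain, budget]

lemma choose_le_exp {n k : ℕ} (hk : 0 < k) (hkn : k ≤ n) :
    (n.choose k : ℝ) ≤ Real.exp ((k : ℝ) * (1 + Real.log ((n : ℝ) / k))) := by
  have hk' : (0:ℝ) < k := by exact_mod_cast hk
  have hn' : (0:ℝ) < n := lt_of_lt_of_le hk' (by exact_mod_cast hkn)
  have hfac : (0:ℝ) < (k ! : ℝ) := by exact_mod_cast k.factorial_pos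
  have h1 : ((k:ℝ)) ^ k / (k ! : ℝ) ≤ Real.exp k := by
    refine le_trans ?_ (Real.sum_le_exp_of_nonneg hk'.le (k+1))
    have hmem : k ∈ Finset.range (k+1) := Finset.self_mem_range_succ k
    exact Finset.single_le_sum (f := fun i => (k:ℝ) ^ i / i !)
      (fun i _ => by positivity) hmem
  have h2 : (n.choose k : ℝ) ≤ (n:ℝ) ^ k / (k ! : ℝ) := Nat.choose_le_pow_div k n
  have hkk : ((k:ℝ)) ^ k ≤ Real.exp k * (k ! : ℝ) := by
    rw [div_le_iff₀ hfac] at h1; exact h1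
  have h3 : (n:ℝ) ^ k / (k ! : ℝ) ≤ (n:ℝ) ^ k * Real.exp k / (k:ℝ) ^ k := by
    rw [div_le_div_iff₀ hfac (by positivity)]
    calc (n:ℝ) ^ k * (k:ℝ) ^ k ≤ (n:ℝ) ^ k * (Real.exp k * (k ! : ℝ)) :=
          mul_le_mul_of_nonneg_left hkk (by positivity)
      _ = (n:ℝ) ^ k * Real.exp k * (k ! : ℝ) := by ring
  have h4 : Real.exp ((k:ℝ) * (1 + Real.log ((n:ℝ) / k))) =
      (n:ℝ) ^ k * Real.exp k / (k:ℝ) ^ k := by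
    rw [Real.exp_nat_mul, Real.exp_add, Real.exp_log (by positivity : (0:ℝ) < (n:ℝ)/k)]
    have he1 : Real.exp 1 ^ k = Real.exp k := by rw [← Real.exp_nat_mul]; norm_num
    rw [mul_pow, div_pow, he1]
    field_simp
  rw [h4]
  exact h2.trans h3


/-- Let `n₁ ≤ 10⁻⁶ n` and `10⁻⁶ n ≤ n₂ ≤ n`, and let `M` be a random
`n×n` matrix with mutually independent entries, each of mean `0`, variance `≤ σ²` where
`σ ≥ 20/√n`, and a.s. bounded in `[−1,1]`. Then with probability at least
`1 − exp(−8(n₁ + 10⁻⁶n)·log(n/n₁ + 10⁶))`, simultaneously for all `S, T ⊆ [n]` with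
`|S| = n₁`, `|T| = n₂`: `|∑_{i∈S}∑_{j∈T} M_{ij}| ≤ 2(n₁ + n₂)σ√n`. -/
theorem stmt_11 {Ω : Type*} [MeasurableSpace Ω] (μ : Measure Ω) [IsProbabilityMeasure μ]
    (n n₁ n₂ : ℕ) (hn : 0 < n) (hn₁pos : 0 < n₁) (hn₂pos : 0 < n₂)
    (hn₁ : (n₁ : ℝ) ≤ (n : ℝ) / 1000000)
    (hn₂lo : (n : ℝ) / 1000000 ≤ (n₂ : ℝ)) (hn₂hi : n₂ ≤ n)
    (σ : ℝ) (hσ : 20 / Real.sqrt n ≤ σ)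
    (M : Fin n × Fin n → Ω → ℝ)
    (hmeas : ∀ p, Measurable (M p))
    (hindep : iIndepFun (m := fun _ : Fin n × Fin n => (inferInstance : MeasurableSpace ℝ)) M μ)
    (hmean : ∀ p, ∫ ω, M p ω ∂μ = 0)
    (hvar : ∀ p, ∫ ω, (M p ω) ^ 2 ∂μ ≤ σ ^ 2)
    (hbdd : ∀ p, ∀ᵐ ω ∂μ, |M p ω| ≤ 1) :
    ENNReal.ofReal
        (1 - Real.exp (-8 * ((n₁ : ℝ) + (n : ℝ) / 1000000) *
          Real.log ((n : ℝ) / n₁ + 1000000))) ≤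
      μ {ω | ∀ S T : Finset (Fin n), S.card = n₁ → T.card = n₂ →
        |∑ i ∈ S, ∑ j ∈ T, M (i, j) ω| ≤ 2 * ((n₁ : ℝ) + n₂) * σ * Real.sqrt n} := by
  classical
  -- basic positivity facts
  have hn1R : (1:ℝ) ≤ (n₁:ℝ) := by exact_mod_cast hn₁pos
  have hnn1 : n₁ ≤ n := by
    have : (n₁:ℝ) ≤ (n:ℝ) := le_trans hn₁ (by
      have : (0:ℝ) ≤ (n:ℝ) := by positivity
      linarith)
    exact_mod_cast this
  have hsqn0 : (0:ℝ) < Real.sqrt n := Real.sqrt_pos.mpr (by exact_mod_cast hn)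
  have hσs : 20 ≤ σ * Real.sqrt n := by
    rw [div_le_iff₀ hsqn0] at hσ
    linarith
  -- apply the arithmetic lemma
  obtain ⟨c, hc0, harith⟩ := arith_main (n₁:ℝ) (n₂:ℝ) (n:ℝ) σ hn1R hn₁ hn₂lo
    (by exact_mod_cast hn₂hi) hσs
  set t : ℝ := 2 * ((n₁ : ℝ) + n₂) * σ * Real.sqrt n with htdef
  set A : ℝ := 8 * ((n₁ : ℝ) + (n : ℝ) / 1000000) * Real.log ((n : ℝ) / n₁ + 1000000)
    with hAdef
  set W : ℝ := ((n₁ : ℝ) * n₂) * (σ ^ 2 * (Real.exp c - 1 - c)) - c * t with hWdef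
  -- the bad events
  set G : Set Ω := {ω | ∀ S T : Finset (Fin n), S.card = n₁ → T.card = n₂ →
      |∑ i ∈ S, ∑ j ∈ T, M (i, j) ω| ≤ t} with hGdef
  set bad : Finset (Fin n) × Finset (Fin n) → Set Ω :=
    fun q => {ω | ¬ |∑ i ∈ q.1, ∑ j ∈ q.2, M (i, j) ω| ≤ t} with hbaddef
  set P : Finset (Finset (Fin n) × Finset (Fin n)) :=
    (Finset.univ.powersetCard n₁) ×ˢ (Finset.univ.powersetCard n₂) with hPdef
  -- negated family
  have hindepN : iIndepFun (m := fun _ : Fin n × Fin n => (inferInstance : MeasurableSpace ℝ))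
      (fun p => (fun x : ℝ => -x) ∘ M p) μ :=
    hindep.comp (fun _ => fun x : ℝ => -x) (fun _ => measurable_neg)
  -- per-pair bound
  have hpair : ∀ q ∈ P, μ (bad q) ≤ ENNReal.ofReal (2 * Real.exp W) := by
    intro q hq
    rw [hPdef, Finset.mem_product] at hq
    have hS : q.1.card = n₁ := (Finset.mem_powersetCard_univ).mp hq.1
    have hT : q.2.card = n₂ := (Finset.mem_powersetCard_univ).mp hq.2
    have hcard : (((q.1 ×ˢ q.2).card : ℕ) : ℝ) = (n₁ : ℝ) * n₂ := by
      rw [Finset.card_product, hS, hT]; push_cast; ring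
    have h1 : μ {ω | t ≤ ∑ p ∈ q.1 ×ˢ q.2, M p ω} ≤ ENNReal.ofReal (Real.exp W) := by
      have := tail_bennett hmeas hindep hmean hvar hbdd (q.1 ×ˢ q.2) hc0 t
      rwa [hcard, ← hWdef] at this
    have h2 : μ {ω | t ≤ -∑ p ∈ q.1 ×ˢ q.2, M p ω} ≤ ENNReal.ofReal (Real.exp W) := by
      have hb := tail_bennett (X := fun p => (fun x : ℝ => -x) ∘ M p)
        (fun p => (hmeas p).neg) hindepN
        (fun p => by
          simp only [Function.comp_apply]
          rw [integral_neg, hmean p, neg_zero])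
        (v := σ ^ 2) (fun p => by
          simp only [Function.comp_apply, neg_sq]
          simpa using hvar p)
        (fun p => by
          filter_upwards [hbdd p] with ω h
          simpa using h)
        (q.1 ×ˢ q.2) hc0 t
      rw [hcard, ← hWdef] at hb
      have hset : {ω | t ≤ ∑ p ∈ q.1 ×ˢ q.2, ((fun x : ℝ => -x) ∘ M p) ω} =
          {ω | t ≤ -∑ p ∈ q.1 ×ˢ q.2, M p ω} := by
        ext ω
        simp [Finset.sum_neg_distrib]
      rwa [hset] at hb
    have hsub : bad q ⊆ {ω | t ≤ ∑ p ∈ q.1 ×ˢ q.2, M p ω} ∪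
        {ω | t ≤ -∑ p ∈ q.1 ×ˢ q.2, M p ω} := by
      intro ω hω
      simp only [hbaddef, Set.mem_setOf_eq, not_le] at hω
      rw [show (∑ i ∈ q.1, ∑ j ∈ q.2, M (i, j) ω) = ∑ p ∈ q.1 ×ˢ q.2, M p ω from
        (Finset.sum_product (s := q.1) (t := q.2) (f := fun p => M p ω)).symm] at hω
      rcases lt_abs.mp hω with h | h
      · exact Or.inl (le_of_lt h)
      · exact Or.inr (le_of_lt h)
    calc μ (bad q) ≤ μ ({ω | t ≤ ∑ p ∈ q.1 ×ˢ q.2, M p ω} ∪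
        {ω | t ≤ -∑ p ∈ q.1 ×ˢ q.2, M p ω}) := measure_mono hsub
      _ ≤ μ {ω | t ≤ ∑ p ∈ q.1 ×ˢ q.2, M p ω} +
          μ {ω | t ≤ -∑ p ∈ q.1 ×ˢ q.2, M p ω} := measure_union_le _ _
      _ ≤ ENNReal.ofReal (Real.exp W) + ENNReal.ofReal (Real.exp W) := add_le_add h1 h2
      _ = ENNReal.ofReal (2 * Real.exp W) := by
          rw [← ENNReal.ofReal_add (Real.exp_pos _).le (Real.exp_pos _).le]
          congr 1
          ring
  -- measurability of G
  have hGmeas : MeasurableSet G := by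
    have hGeq : G = ⋂ (S : Finset (Fin n)) (T : Finset (Fin n)) (_ : S.card = n₁)
        (_ : T.card = n₂), {ω | |∑ i ∈ S, ∑ j ∈ T, M (i, j) ω| ≤ t} := by
      ext ω
      simp only [hGdef, Set.mem_setOf_eq, Set.mem_iInter]
    rw [hGeq]
    refine MeasurableSet.iInter fun S => MeasurableSet.iInter fun T =>
      MeasurableSet.iInter fun _ => MeasurableSet.iInter fun _ => ?_
    have hmsum : Measurable fun ω => ∑ i ∈ S, ∑ j ∈ T, M (i, j) ω :=
      Finset.measurable_sum _ fun i _ => Finset.measurable_sum _ fun j _ => hmeas (i, j)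
    exact measurableSet_le hmsum.abs measurable_const
  -- union bound
  have hsubU : Gᶜ ⊆ ⋃ q ∈ P, bad q := by
    intro ω hω
    simp only [hGdef, Set.mem_compl_iff, Set.mem_setOf_eq] at hω
    push_neg at hω
    obtain ⟨S, T, hS, hT, hlt⟩ := hω
    refine Set.mem_biUnion (show (S, T) ∈ P from ?_) (show ω ∈ bad (S, T) from ?_)
    · rw [hPdef, Finset.mem_product]
      exact ⟨Finset.mem_powersetCard_univ.mpr hS, Finset.mem_powersetCard_univ.mpr hT⟩
    · simp only [hbaddef, Set.mem_setOf_eq]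
      exact not_le.mpr hlt
  -- numeric comparison
  have hA0 : 0 ≤ A := by
    rw [hAdef]
    have h1 : (0:ℝ) ≤ (n:ℝ) / n₁ := by positivity
    have h2 : (0:ℝ) ≤ Real.log ((n:ℝ) / n₁ + 1000000) := Real.log_nonneg (by linarith)
    have h3 : (0:ℝ) ≤ (n₁:ℝ) + (n:ℝ) / 1000000 := by positivity
    positivity
  have hreal : ((n.choose n₁ * n.choose n₂ : ℕ) : ℝ) * (2 * Real.exp W) ≤ Real.exp (-A) := by
    have h1 : (n.choose n₁ : ℝ) ≤ Real.exp ((n₁:ℝ) * (1 + Real.log ((n:ℝ) / n₁))) :=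
      choose_le_exp hn₁pos hnn1
    have h2 : (n.choose n₂ : ℝ) ≤ Real.exp ((n₂:ℝ) * (1 + Real.log ((n:ℝ) / n₂))) :=
      choose_le_exp hn₂pos hn₂hi
    push_cast
    calc (n.choose n₁ : ℝ) * (n.choose n₂ : ℝ) * (2 * Real.exp W)
        ≤ Real.exp ((n₁:ℝ) * (1 + Real.log ((n:ℝ) / n₁))) *
            Real.exp ((n₂:ℝ) * (1 + Real.log ((n:ℝ) / n₂))) * (2 * Real.exp W) := by
          have c1 : (0:ℝ) ≤ (n.choose n₂ : ℝ) := by positivity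
          have c2 : (0:ℝ) ≤ 2 * Real.exp W := by positivity
          have := mul_le_mul h1 h2 c1 (Real.exp_pos _).le
          exact mul_le_mul_of_nonneg_right this c2
      _ = Real.exp ((n₁:ℝ) * (1 + Real.log ((n:ℝ) / n₁)) +
            (n₂:ℝ) * (1 + Real.log ((n:ℝ) / n₂)) + Real.log 2 + W) := by
          rw [Real.exp_add, Real.exp_add, Real.exp_add, Real.exp_log (by norm_num : (0:ℝ) < 2)]
          ring
      _ ≤ Real.exp (-A) := by
          apply Real.exp_le_exp.mpr
          rw [hAdef] at harith ⊢
          linarith only [harith]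
  have hcompl : μ Gᶜ ≤ ENNReal.ofReal (Real.exp (-A)) := by
    have h1 : μ Gᶜ ≤ ∑ q ∈ P, μ (bad q) :=
      (measure_mono hsubU).trans (measure_biUnion_finset_le P bad)
    have h2 : ∑ q ∈ P, μ (bad q) ≤ P.card • ENNReal.ofReal (2 * Real.exp W) :=
      Finset.sum_le_card_nsmul P _ _ hpair
    have hPcard : P.card = n.choose n₁ * n.choose n₂ := by
      rw [hPdef, Finset.card_product, Finset.card_powersetCard, Finset.card_powersetCard,
        Finset.card_univ, Fintype.card_fin]
    have h3 : P.card • ENNReal.ofReal (2 * Real.exp W) ≤ ENNReal.ofReal (Real.exp (-A)) := by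
      rw [nsmul_eq_mul, hPcard, ← ENNReal.ofReal_natCast,
        ← ENNReal.ofReal_mul (by positivity)]
      exact ENNReal.ofReal_le_ofReal hreal
    exact h1.trans (h2.trans h3)
  -- conclude
  have hexpA1 : Real.exp (-A) ≤ 1 := Real.exp_le_one_iff.mpr (by linarith)
  have hgoalexp : -8 * ((n₁ : ℝ) + (n : ℝ) / 1000000) *
      Real.log ((n : ℝ) / n₁ + 1000000) = -A := by
    rw [hAdef]; ring
  rw [hgoalexp]
  have hq := prob_compl_eq_one_sub (μ := μ) hGmeas
  rw [hq, tsub_le_iff_right] at hcompl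
  have hsplit : ENNReal.ofReal (Real.exp (-A)) + ENNReal.ofReal (1 - Real.exp (-A)) = 1 := by
    rw [← ENNReal.ofReal_add (Real.exp_pos _).le (by linarith : (0:ℝ) ≤ 1 - Real.exp (-A))]
    norm_num
  have hfinal : ENNReal.ofReal (Real.exp (-A)) + ENNReal.ofReal (1 - Real.exp (-A)) ≤
      ENNReal.ofReal (Real.exp (-A)) + μ G := by
    rw [hsplit]; exact hcompl
  exact (ENNReal.add_le_add_iff_left ENNReal.ofReal_ne_top).mp hfinal
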